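/- Let Y be a compact Hausdorff G-space and h ∈ C(Y). If the orbit G·h is a fragmented family (for every nonempty B ⊆ Y and ε > 0 there is an open set O with B ∩ O ≠ ∅ and |h(gy) − h(gy')| < ε for all g ∈ G and y, y' ∈ B ∩ O), then h is strongly uniformly continuous with respect to the point y when restricted to orbits: for every y ∈ Y and ε > 0 there is a neighborhood U of the identity of G such that |h(gy) − h(guy)| < ε for all g ∈ G and u ∈ U. -/

import Mathlib

open Filter Topology

theorem stmt10 {G Y : Type*} [Group G] [TopologicalSpace G] [IsTopologicalGroup G]
    [TopologicalSpace Y] [CompactSpace Y] [T2Space Y] [MulAction G Y] [ContinuousSMul G Y]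
    (h : C(Y, ℝ))
    (hfrag : ∀ B : Set Y, B.Nonempty → ∀ ε > (0 : ℝ), ∃ O : Set Y, IsOpen O ∧
      (B ∩ O).Nonempty ∧
      ∀ g : G, ∀ y ∈ B ∩ O, ∀ y' ∈ B ∩ O, |h (g • y) - h (g • y')| < ε) :
    ∀ y : Y, ∀ ε > (0 : ℝ), ∃ U ∈ 𝓝 (1 : G), ∀ g : G, ∀ u ∈ U,
      |h (g • y) - h (g • (u • y))| < ε := by
  intro y ε hε
  obtain ⟨O, hO, ⟨z, hzB, hzO⟩, hsep⟩ :=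
    hfrag (MulAction.orbit G y) (MulAction.nonempty_orbit y) ε hε
  obtain ⟨g₀, rfl⟩ := hzB
  refine ⟨{u : G | (g₀ * u * g₀⁻¹) • (g₀ • y) ∈ O}, ?_, ?_⟩
  · have hc : Continuous fun u : G => (g₀ * u * g₀⁻¹) • (g₀ • y) := by
      fun_prop
    have := hc.continuousAt (x := (1 : G)) (hO.mem_nhds (by simpa using hzO))
    exact this
  · intro g u hu
    have h1 : g₀ • y ∈ MulAction.orbit G y ∩ O := ⟨⟨g₀, rfl⟩, hzO⟩
    have h2 : (g₀ * u * g₀⁻¹) • (g₀ • y) ∈ MulAction.orbit G y ∩ O :=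
      ⟨⟨g₀ * u * g₀⁻¹ * g₀, by simp [mul_smul]⟩, hu⟩
    have := hsep (g * g₀⁻¹) _ h1 _ h2
    simpa [smul_smul, mul_assoc] using this
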